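/- Return probability bound after hitting r★ (Lemma 7): Fix integers n ≥ 1, q ≥ 1 and reals 0 < γmin ≤ γmax, λ ≥ max(γmax, γmin + γmax/q). Let (Ȳ_m) be the birth-death Markov chain on {0,...,n} with transition matrix B given by B_{i,i−1} = γmax·i/(nqλ), B_{i,i+1} = (γmin/λ)(1 − i/n), B_{i,i} = 1 − B_{i,i−1} − B_{i,i+1}, started at Ȳ₀ = 0. Suppose 0 < δ ≤ q/(q + e·γ★) with γ★ := γmax/γmin, set r★ := ⌊nδ⌋ (with nδ ≥ 1), let r be an integer with 0 ≤ r ≤ ⌊nδ⌋/2, and let τ_{r★} := inf{m : Ȳ_m = r★}. Then for every m ≥ 0, P(Ȳ_m ≤ r and τ_{r★} ≤ m) ≤ m² · exp(−nδ/2 + 1). -/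

import Mathlib

/-- The birth-death transition matrix `B` on `{0,…,n}` with
`B_{i,i−1} = γmax·i/(nqλ)`, `B_{i,i+1} = (γmin/λ)(1 − i/n)` and
`B_{i,i} = 1 − B_{i,i−1} − B_{i,i+1}`. -/
noncomputable def bdMatrix (n q : ℕ) (γmin γmax lam : ℝ) :
    Matrix (Fin (n + 1)) (Fin (n + 1)) ℝ :=
  Matrix.of fun i j =>
    if (j : ℕ) + 1 = (i : ℕ) then γmax * (i : ℕ) / ((n : ℝ) * q * lam)
    else if (i : ℕ) + 1 = (j : ℕ) then (γmin / lam) * (1 - (i : ℕ) / n)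
    else if i = j then
      1 - γmax * (i : ℕ) / ((n : ℝ) * q * lam) - (γmin / lam) * (1 - (i : ℕ) / n)
    else 0

/-- `P(Ȳ_m ≤ r ∧ τ_s ≤ m)` for the Markov chain with transition matrix `B` started
at `0`: the probability that at time `m` the chain is at a state `≤ r` and it has
visited the state `s` at some time in `0,…,m`, written as a sum over paths of the
product of one-step transition probabilities. -/
noncomputable def hitAndLowProb {n : ℕ} (B : Matrix (Fin (n + 1)) (Fin (n + 1)) ℝ)
    (s r m : ℕ) : ℝ :=
  ∑ ω : Fin (m + 1) → Fin (n + 1),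
    if ω 0 = 0 ∧ (ω (Fin.last m) : ℕ) ≤ r ∧ ∃ i, (ω i : ℕ) = s then
      ∏ i : Fin m, B (ω i.castSucc) (ω i.succ)
    else 0

namespace RPB

open Finset

noncomputable def pdown (n q : ℕ) (γmax lam : ℝ) (i : ℕ) : ℝ := γmax * i / ((n:ℝ) * q * lam)
noncomputable def pup (n : ℕ) (γmin lam : ℝ) (i : ℕ) : ℝ := (γmin / lam) * (1 - (i:ℝ) / n)

lemma bdMatrix_apply {n q : ℕ} {γmin γmax lam : ℝ} (x y : Fin (n+1)) :
    bdMatrix n q γmin γmax lam x y =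
      if (y:ℕ)+1 = (x:ℕ) then pdown n q γmax lam x
      else if (x:ℕ)+1 = (y:ℕ) then pup n γmin lam x
      else if x = y then 1 - pdown n q γmax lam x - pup n γmin lam x else 0 := rfl

noncomputable def stepProd {n t : ℕ} (B : Matrix (Fin (n+1)) (Fin (n+1)) ℝ)
    (ω : Fin (t+1) → Fin (n+1)) : ℝ :=
  ∏ i : Fin t, B (ω i.castSucc) (ω i.succ)

open scoped Classical in
noncomputable def condSum {n t : ℕ} (B : Matrix (Fin (n+1)) (Fin (n+1)) ℝ)
    (P : (Fin (t+1) → Fin (n+1)) → Prop) : ℝ :=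
  ∑ ω : Fin (t+1) → Fin (n+1), if P ω then stepProd B ω else 0

lemma stepProd_nonneg {n t : ℕ} {B : Matrix (Fin (n+1)) (Fin (n+1)) ℝ}
    (hB : ∀ x y, 0 ≤ B x y) (ω : Fin (t+1) → Fin (n+1)) : 0 ≤ stepProd B ω :=
  Finset.prod_nonneg fun _ _ => hB _ _

lemma condSum_nonneg {n t : ℕ} {B : Matrix (Fin (n+1)) (Fin (n+1)) ℝ}
    (hB : ∀ x y, 0 ≤ B x y) (P : (Fin (t+1) → Fin (n+1)) → Prop) :
    0 ≤ condSum B P := by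
  classical
  refine Finset.sum_nonneg fun ω _ => ?_
  split
  · exact stepProd_nonneg hB ω
  · exact le_rfl

lemma condSum_mono {n t : ℕ} {B : Matrix (Fin (n+1)) (Fin (n+1)) ℝ}
    (hB : ∀ x y, 0 ≤ B x y) {P Q : (Fin (t+1) → Fin (n+1)) → Prop}
    (h : ∀ ω, P ω → Q ω) : condSum B P ≤ condSum B Q := by
  classical
  refine Finset.sum_le_sum fun ω _ => ?_
  by_cases hP : P ω
  · rw [if_pos hP, if_pos (h ω hP)]
  · rw [if_neg hP]
    split
    · exact stepProd_nonneg hB ω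
    · exact le_rfl

lemma condSum_congr {n t : ℕ} (B : Matrix (Fin (n+1)) (Fin (n+1)) ℝ)
    {P Q : (Fin (t+1) → Fin (n+1)) → Prop}
    (h : ∀ ω, P ω ↔ Q ω) : condSum B P = condSum B Q := by
  classical
  exact Finset.sum_congr rfl fun ω _ => if_congr (h ω) rfl rfl

lemma sum_ite_le {n : ℕ} {c : ℝ} (hc : 0 ≤ c) (P : Fin (n+1) → Prop) [DecidablePred P]
    (h : ∀ a b, P a → P b → a = b) :
    ∑ y : Fin (n+1), (if P y then c else 0) ≤ c := by
  classical
  by_cases hex : ∃ y, P y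
  · obtain ⟨y0, hy0⟩ := hex
    have he : ∀ y, P y ↔ y = y0 := fun y => ⟨fun h' => h _ _ h' hy0, fun e => e ▸ hy0⟩
    calc ∑ y : Fin (n+1), (if P y then c else 0)
        = ∑ y : Fin (n+1), (if y = y0 then c else 0) :=
          Finset.sum_congr rfl fun y _ => if_congr (he y) rfl rfl
      _ = c := by rw [Finset.sum_ite_eq' Finset.univ y0 (fun _ => c), if_pos (Finset.mem_univ _)]
      _ ≤ c := le_rfl
  · push_neg at hex
    calc ∑ y : Fin (n+1), (if P y then c else 0) = 0 :=
        Finset.sum_eq_zero fun y _ => if_neg (hex y)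
      _ ≤ c := hc

lemma condSum_strip_left {n t : ℕ} (B : Matrix (Fin (n+1)) (Fin (n+1)) ℝ)
    (x : Fin (n+1)) (P : (Fin (t+1) → Fin (n+1)) → Prop) :
    condSum B (fun ω : Fin (t+2) → Fin (n+1) => ω 0 = x ∧ P (fun j => ω j.succ))
      = ∑ y : Fin (n+1), B x y * condSum B (fun ω : Fin (t+1) → Fin (n+1) => ω 0 = y ∧ P ω) := by
  classical
  have key : ∀ (y : Fin (n+1)) (g : Fin (t+1) → Fin (n+1)),
      stepProd B (Fin.cons y g) = B y (g 0) * stepProd B g := by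
    intro y g
    rw [stepProd, Fin.prod_univ_succ, stepProd]
    simp only [Fin.castSucc_zero, Fin.cons_zero, Fin.cons_succ, ← Fin.succ_castSucc]
  have tail : ∀ (y : Fin (n+1)) (g : Fin (t+1) → Fin (n+1)),
      (fun j : Fin (t+1) => (Fin.cons y g : Fin (t+2) → Fin (n+1)) j.succ) = g := by
    intro y g; funext j; rw [Fin.cons_succ]
  have lhs : condSum B (fun ω : Fin (t+2) → Fin (n+1) => ω 0 = x ∧ P (fun j => ω j.succ))
      = ∑ g : Fin (t+1) → Fin (n+1), (if P g then B x (g 0) * stepProd B g else 0) := by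
    rw [condSum, ← Equiv.sum_comp (Fin.consEquiv (fun _ : Fin (t+2) => Fin (n+1)))]
    rw [Fintype.sum_prod_type]
    have keyE : ∀ (y : Fin (n+1)) (g : Fin (t+1) → Fin (n+1)),
        stepProd B ((Fin.consEquiv (fun _ : Fin (t+2) => Fin (n+1))) (y, g)) = B y (g 0) * stepProd B g :=
      fun y g => key y g
    simp only [keyE, Fin.consEquiv_apply, Fin.cons_zero, tail]
    have : ∀ (y : Fin (n+1)) (g : Fin (t+1) → Fin (n+1)),
        (if y = x ∧ P g then B y (g 0) * stepProd B g else 0)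
          = (if y = x then (if P g then B x (g 0) * stepProd B g else 0) else 0) := by
      intro y g
      by_cases h1 : y = x
      · subst h1
        by_cases h2 : P g
        · rw [if_pos ⟨rfl, h2⟩, if_pos rfl, if_pos h2]
        · rw [if_neg (fun h => h2 h.2), if_pos rfl, if_neg h2]
      · rw [if_neg (fun h => h1 h.1), if_neg h1]
    simp only [this]
    rw [Finset.sum_comm]
    refine Finset.sum_congr rfl fun g _ => ?_
    rw [Finset.sum_ite_eq' Finset.univ x (fun _ => if P g then B x (g 0) * stepProd B g else 0),
      if_pos (Finset.mem_univ _)]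
  have rhs : ∑ y : Fin (n+1), B x y * condSum B (fun ω : Fin (t+1) → Fin (n+1) => ω 0 = y ∧ P ω)
      = ∑ g : Fin (t+1) → Fin (n+1), (if P g then B x (g 0) * stepProd B g else 0) := by
    simp only [condSum, Finset.mul_sum, mul_ite, mul_zero]
    rw [Finset.sum_comm]
    refine Finset.sum_congr rfl fun g _ => ?_
    by_cases hP : P g
    · have h2 : ∀ y : Fin (n+1), (if g 0 = y ∧ P g then B x y * stepProd B g else 0)
          = (if y = g 0 then B x y * stepProd B g else 0) := by
        intro y
        by_cases h : g 0 = y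
        · rw [if_pos ⟨h, hP⟩, if_pos h.symm]
        · rw [if_neg (fun hh => h hh.1), if_neg (fun hh => h hh.symm)]
      simp only [h2]
      rw [Finset.sum_ite_eq' Finset.univ (g 0) (fun y => B x y * stepProd B g),
        if_pos (Finset.mem_univ _), if_pos hP]
    · simp [hP]
  rw [lhs, rhs]

lemma condSum_strip_last {n t : ℕ} {B : Matrix (Fin (n+1)) (Fin (n+1)) ℝ}
    (hB : ∀ x y, 0 ≤ B x y) (hrow : ∀ x, ∑ y, B x y ≤ 1)
    (P : (Fin (t+1) → Fin (n+1)) → Prop) :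
    condSum B (fun ω : Fin (t+2) → Fin (n+1) => P (fun j => ω j.castSucc)) ≤ condSum B P := by
  classical
  have key : ∀ (y : Fin (n+1)) (g : Fin (t+1) → Fin (n+1)),
      stepProd B (Fin.snoc g y : Fin (t+2) → Fin (n+1)) = stepProd B g * B (g (Fin.last t)) y := by
    intro y g
    rw [stepProd, Fin.prod_univ_castSucc, stepProd]
    simp only [Fin.succ_castSucc, Fin.snoc_castSucc, Fin.succ_last, Fin.snoc_last]
  have keyE : ∀ (y : Fin (n+1)) (g : Fin (t+1) → Fin (n+1)),
      stepProd B ((Fin.snocEquiv (fun _ : Fin (t+2) => Fin (n+1))) (y, g))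
        = stepProd B g * B (g (Fin.last t)) y := fun y g => key y g
  have tailE : ∀ (y : Fin (n+1)) (g : Fin (t+1) → Fin (n+1)),
      (fun j : Fin (t+1) => ((Fin.snocEquiv (fun _ : Fin (t+2) => Fin (n+1))) (y, g)) j.castSucc) = g := by
    intro y g; funext j
    show (Fin.snoc g y : Fin (t+2) → Fin (n+1)) j.castSucc = g j
    rw [Fin.snoc_castSucc]
  rw [condSum, ← Equiv.sum_comp (Fin.snocEquiv (fun _ : Fin (t+2) => Fin (n+1))), Fintype.sum_prod_type]
  simp only [keyE, tailE]
  rw [Finset.sum_comm, condSum]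
  refine Finset.sum_le_sum fun g _ => ?_
  by_cases hP : P g
  · simp only [if_pos hP]
    rw [← Finset.mul_sum]
    calc stepProd B g * ∑ y : Fin (n+1), B (g (Fin.last t)) y
        ≤ stepProd B g * 1 := mul_le_mul_of_nonneg_left (hrow _) (stepProd_nonneg hB g)
      _ = stepProd B g := mul_one _
  · simp [hP]

section Analytic

variable {n q : ℕ} {γmin γmax lam δ : ℝ}

lemma lam_pos (hγmin : 0 < γmin) (hγ : γmin ≤ γmax) (hlam1 : γmax ≤ lam) : 0 < lam :=
  lt_of_lt_of_le (lt_of_lt_of_le hγmin hγ) hlam1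

lemma pdown_nonneg (hγmin : 0 < γmin) (hγ : γmin ≤ γmax) (hlam1 : γmax ≤ lam) (i : ℕ) :
    0 ≤ pdown n q γmax lam i := by
  have h0 : 0 < lam := lam_pos hγmin hγ hlam1
  have h1 : 0 ≤ γmax := le_trans hγmin.le hγ
  rw [pdown]
  positivity

lemma pup_nonneg (hn : 1 ≤ n) (hγmin : 0 < γmin) (hγ : γmin ≤ γmax) (hlam1 : γmax ≤ lam)
    {i : ℕ} (hi : i ≤ n) : 0 ≤ pup n γmin lam i := by
  have h0 : 0 < lam := lam_pos hγmin hγ hlam1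
  have hn0 : (0:ℝ) < n := by exact_mod_cast hn
  have : (i:ℝ)/n ≤ 1 := by
    rw [div_le_one hn0]; exact_mod_cast hi
  have h2 : (0:ℝ) ≤ 1 - (i:ℝ)/n := by linarith
  rw [pup]
  positivity

lemma pd_pu_le_one (hn : 1 ≤ n) (hq : 1 ≤ q) (hγmin : 0 < γmin) (hγ : γmin ≤ γmax)
    (hlam1 : γmax ≤ lam) (hlam2 : γmin + γmax / (q:ℝ) ≤ lam)
    {i : ℕ} (hi : i ≤ n) : pdown n q γmax lam i + pup n γmin lam i ≤ 1 := by
  have h0 : 0 < lam := lam_pos hγmin hγ hlam1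
  have hn0 : (0:ℝ) < n := by exact_mod_cast hn
  have hq0 : (0:ℝ) < q := by exact_mod_cast hq
  have ht1 : (i:ℝ)/n ≤ 1 := by rw [div_le_one hn0]; exact_mod_cast hi
  have ht0 : 0 ≤ (i:ℝ)/n := by positivity
  have hγmax : 0 ≤ γmax := le_trans hγmin.le hγ
  have hA : pdown n q γmax lam i = γmax/((q:ℝ)*lam) * ((i:ℝ)/n) := by
    rw [pdown]; field_simp
  have hA0 : 0 ≤ γmax/((q:ℝ)*lam) := by positivity
  have hB0 : 0 ≤ γmin/lam := by positivity
  have hAB : γmax/((q:ℝ)*lam) + γmin/lam ≤ 1 := by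
    have he : γmax/((q:ℝ)*lam) + γmin/lam = (γmax/q + γmin)/lam := by
      field_simp
    rw [he, div_le_one h0]; linarith
  rw [hA, pup]
  nlinarith [mul_le_mul_of_nonneg_left ht1 hA0]

lemma key_ratio (hn : 1 ≤ n) (hq : 1 ≤ q) (hγmin : 0 < γmin) (hγ : γmin ≤ γmax)
    (hlam1 : γmax ≤ lam) (hδ0 : 0 < δ)
    (hδ : δ ≤ (q : ℝ) / (q + Real.exp 1 * (γmax/γmin)))
    {i : ℕ} (hi1 : 1 ≤ i) (hi : (i:ℝ) ≤ (n:ℝ)*δ) :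
    Real.exp 1 * pdown n q γmax lam i ≤ pup n γmin lam i := by
  have h0 : 0 < lam := lam_pos hγmin hγ hlam1
  have hn0 : (0:ℝ) < n := by exact_mod_cast hn
  have hq0 : (0:ℝ) < q := by exact_mod_cast hq
  have he0 : (0:ℝ) < Real.exp 1 := Real.exp_pos 1
  have hγmax : 0 < γmax := lt_of_lt_of_le hγmin hγ
  have hD : (0:ℝ) < q + Real.exp 1 * (γmax/γmin) := by positivity
  have step0 : δ * ((q:ℝ) + Real.exp 1 * (γmax/γmin)) ≤ q := (le_div_iff₀ hD).mp hδ
  have step1 : Real.exp 1 * γmax * δ ≤ (q:ℝ) * γmin * (1 - δ) := by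
    have h := mul_le_mul_of_nonneg_right step0 hγmin.le
    have hg : Real.exp 1 * (γmax/γmin) * γmin = Real.exp 1 * γmax := by
      field_simp
    nlinarith [h]
  have hmain : Real.exp 1 * γmax * (i:ℝ) ≤ (q:ℝ)*γmin*((n:ℝ)-(i:ℝ)) := by
    have h1 : Real.exp 1 * γmax * (i:ℝ) ≤ Real.exp 1 * γmax * ((n:ℝ)*δ) :=
      mul_le_mul_of_nonneg_left hi (by positivity)
    have h3 : (n:ℝ) * (Real.exp 1*γmax*δ) ≤ (n:ℝ) * ((q:ℝ)*γmin*(1-δ)) :=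
      mul_le_mul_of_nonneg_left step1 hn0.le
    have h4 : 0 ≤ (q:ℝ)*γmin*((n:ℝ)*δ - i) :=
      mul_nonneg (mul_nonneg hq0.le hγmin.le) (by linarith)
    nlinarith [h1, h3, h4]
  have hrhs : pup n γmin lam i = γmin * ((n:ℝ) - i) / ((n:ℝ)*lam) := by
    rw [pup]; field_simp
  have hlhs : Real.exp 1 * pdown n q γmax lam i
      = (Real.exp 1 * γmax * i) / ((n:ℝ)*(q:ℝ)*lam) := by
    rw [pdown]; ring
  rw [hlhs, hrhs, div_le_div_iff₀ (by positivity) (by positivity)]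
  nlinarith [mul_le_mul_of_nonneg_right hmain (mul_nonneg hn0.le h0.le)]

end Analytic

section MatrixFacts

variable {n q : ℕ} {γmin γmax lam : ℝ}

lemma bdMatrix_nonneg (hn : 1 ≤ n) (hq : 1 ≤ q) (hγmin : 0 < γmin) (hγ : γmin ≤ γmax)
    (hlam1 : γmax ≤ lam) (hlam2 : γmin + γmax / (q:ℝ) ≤ lam) :
    ∀ x y : Fin (n+1), 0 ≤ bdMatrix n q γmin γmax lam x y := by
  intro x y
  rw [bdMatrix_apply]
  have h1 := pdown_nonneg (n := n) (q := q) hγmin hγ hlam1 (x:ℕ)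
  have h2 := pup_nonneg (n := n) hn hγmin hγ hlam1 (Fin.is_le x)
  have h3 := pd_pu_le_one (n := n) (q := q) hn hq hγmin hγ hlam1 hlam2 (Fin.is_le x)
  split_ifs <;> linarith

lemma bdMatrix_row_le (hn : 1 ≤ n) (hq : 1 ≤ q) (hγmin : 0 < γmin) (hγ : γmin ≤ γmax)
    (hlam1 : γmax ≤ lam) (hlam2 : γmin + γmax / (q:ℝ) ≤ lam) :
    ∀ x : Fin (n+1), ∑ y : Fin (n+1), bdMatrix n q γmin γmax lam x y ≤ 1 := by
  intro x
  classical
  have h1 := pdown_nonneg (n := n) (q := q) hγmin hγ hlam1 (x:ℕ)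
  have h2 := pup_nonneg (n := n) hn hγmin hγ hlam1 (Fin.is_le x)
  have h3 := pd_pu_le_one (n := n) (q := q) hn hq hγmin hγ hlam1 hlam2 (Fin.is_le x)
  have split : ∀ y : Fin (n+1), bdMatrix n q γmin γmax lam x y
      = (if (y:ℕ)+1 = (x:ℕ) then pdown n q γmax lam x else 0)
        + (if (x:ℕ)+1 = (y:ℕ) then pup n γmin lam x else 0)
        + (if (x:ℕ) = (y:ℕ) then 1 - pdown n q γmax lam x - pup n γmin lam x else 0) := by
    intro y
    rw [bdMatrix_apply]
    simp only [Fin.ext_iff]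
    split_ifs <;> first | ring1 | (exfalso; omega)
  rw [Finset.sum_congr rfl fun y _ => split y]
  rw [Finset.sum_add_distrib, Finset.sum_add_distrib]
  have s1 : ∑ y : Fin (n+1), (if (y:ℕ)+1 = (x:ℕ) then pdown n q γmax lam x else 0)
      ≤ pdown n q γmax lam x :=
    sum_ite_le h1 _ (fun a b ha hb => Fin.ext (by omega))
  have s2 : ∑ y : Fin (n+1), (if (x:ℕ)+1 = (y:ℕ) then pup n γmin lam x else 0)
      ≤ pup n γmin lam x :=
    sum_ite_le h2 _ (fun a b ha hb => Fin.ext (by omega))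
  have s3 : ∑ y : Fin (n+1), (if (x:ℕ) = (y:ℕ) then 1 - pdown n q γmax lam x - pup n γmin lam x else 0)
      ≤ 1 - pdown n q γmax lam x - pup n γmin lam x :=
    sum_ite_le (by linarith) _ (fun a b ha hb => Fin.ext (by omega))
  linarith

lemma bdMatrix_ne_zero {x y : Fin (n+1)} (h : bdMatrix n q γmin γmax lam x y ≠ 0) :
    (y:ℕ)+1 = (x:ℕ) ∨ (x:ℕ)+1 = (y:ℕ) ∨ (x:ℕ) = (y:ℕ) := by
  rw [bdMatrix_apply] at h
  split_ifs at h with h1 h2 h3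
  · exact Or.inl h1
  · exact Or.inr (Or.inl h2)
  · exact Or.inr (Or.inr (by rw [h3]))
  · exact absurd rfl h

end MatrixFacts

section Mid

noncomputable def midSum {n : ℕ} (B : Matrix (Fin (n+1)) (Fin (n+1)) ℝ) (r s d : ℕ)
    (x : Fin (n+1)) : ℝ :=
  condSum B (fun ω : Fin (d+1) → Fin (n+1) =>
    ω 0 = x ∧ (∀ j : Fin (d+1), 0 < (j:ℕ) → (j:ℕ) < d → (r < (ω j:ℕ) ∧ (ω j:ℕ) < s))
      ∧ (ω (Fin.last d) : ℕ) = r)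

def midP {n : ℕ} (r s d : ℕ) (ω : Fin (d+1) → Fin (n+1)) : Prop :=
  (∀ j : Fin (d+1), (j:ℕ) < d → (r < (ω j:ℕ) ∧ (ω j:ℕ) < s)) ∧ (ω (Fin.last d) : ℕ) = r

lemma midSum_succ {n : ℕ} (B : Matrix (Fin (n+1)) (Fin (n+1)) ℝ) (r s d : ℕ) (x : Fin (n+1)) :
    midSum B r s (d+1) x
      = ∑ y : Fin (n+1), B x y
          * condSum B (fun ω : Fin (d+1) → Fin (n+1) => ω 0 = y ∧ midP r s d ω) := by
  rw [midSum, ← condSum_strip_left B x (midP (n := n) r s d)]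
  apply condSum_congr
  intro ω
  constructor
  · rintro ⟨h0, h1, h2⟩
    refine ⟨h0, ⟨?_, ?_⟩⟩
    · intro j hj
      exact h1 j.succ (by simp) (by simp [Fin.val_succ]; omega)
    · show (ω (Fin.last d).succ : ℕ) = r
      rw [Fin.succ_last]
      exact h2
  · rintro ⟨h0, h1⟩
    refine ⟨h0, ?_, ?_⟩
    · intro j hj0 hjd
      have hje : j = (⟨(j:ℕ)-1, by omega⟩ : Fin (d+1)).succ := by
        apply Fin.ext; simp [Fin.val_succ]; omega
      rw [hje]
      exact h1.1 _ (by simp; omega)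
    · have h2 := h1.2
      show (ω (Fin.last (d+1)) : ℕ) = r
      rw [← Fin.succ_last]
      exact h2

lemma condSum_zero_pin_le {n : ℕ} (B : Matrix (Fin (n+1)) (Fin (n+1)) ℝ)
    (y : Fin (n+1)) (P : (Fin 1 → Fin (n+1)) → Prop) :
    condSum B (fun ω : Fin 1 → Fin (n+1) => ω 0 = y ∧ P ω) ≤ 1 := by
  classical
  rw [condSum]
  have hpt : ∀ ω : Fin (0+1) → Fin (n+1),
      (@ite ℝ (ω 0 = y ∧ P ω) (Classical.propDecidable _) (stepProd B ω) 0)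
        ≤ (if ω = (fun _ => y) then (1:ℝ) else 0) := by
    intro ω
    by_cases h : ω 0 = y ∧ P ω
    · rw [if_pos h, if_pos ?_]
      · rw [stepProd]
        simp
      · funext j
        have hj : j = 0 := Fin.ext (by omega)
        rw [hj, h.1]
    · rw [if_neg h]
      split <;> norm_num
  refine le_trans (Finset.sum_le_sum fun ω _ => hpt ω) ?_
  rw [Finset.sum_ite_eq' Finset.univ (fun _ => y) (fun _ => (1:ℝ)),
    if_pos (Finset.mem_univ _)]

end Mid

section StepBound

variable {n q : ℕ} {γmin γmax lam : ℝ} {r s : ℕ}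

lemma step_bound (hn : 1 ≤ n) (hq : 1 ≤ q) (hγmin : 0 < γmin) (hγ : γmin ≤ γmax)
    (hlam1 : γmax ≤ lam) (hlam2 : γmin + γmax / (q:ℝ) ≤ lam)
    (hkey : ∀ i : ℕ, 1 ≤ i → i ≤ s → Real.exp 1 * pdown n q γmax lam i ≤ pup n γmin lam i)
    (x : Fin (n+1)) (hx1 : r < (x:ℕ)) (hx2 : (x:ℕ) ≤ s)
    (G : Fin (n+1) → ℝ) (hG0 : ∀ y, 0 ≤ G y)
    (hGF : ∀ y : Fin (n+1), G y ≤ Real.exp ((r:ℝ) - (y:ℕ))) :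
    ∑ y : Fin (n+1), bdMatrix n q γmin γmax lam x y * G y ≤ Real.exp ((r:ℝ) - (x:ℕ)) := by
  classical
  set F : ℕ → ℝ := fun a => Real.exp ((r:ℝ) - a) with hF
  have hFpos : ∀ a : ℕ, 0 < F a := fun a => Real.exp_pos _
  have hd := pdown_nonneg (n := n) (q := q) hγmin hγ hlam1 (x:ℕ)
  have hu := pup_nonneg (n := n) hn hγmin hγ hlam1 (Fin.is_le x)
  have hsum := pd_pu_le_one (n := n) (q := q) hn hq hγmin hγ hlam1 hlam2 (Fin.is_le x)
  have hk := hkey (x:ℕ) (by omega) hx2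
  have hFdown : F ((x:ℕ) - 1) = Real.exp 1 * F (x:ℕ) := by
    simp only [hF]
    rw [← Real.exp_add]
    congr 1
    have hx1' : 1 ≤ (x:ℕ) := by omega
    rw [Nat.cast_sub hx1']
    push_cast
    ring
  have hFup : F ((x:ℕ) + 1) = F (x:ℕ) * Real.exp (-1) := by
    simp only [hF]
    rw [← Real.exp_add]
    congr 1
    push_cast
    ring
  have hpt : ∀ y : Fin (n+1), bdMatrix n q γmin γmax lam x y * G y
      ≤ (if (y:ℕ)+1 = (x:ℕ) then pdown n q γmax lam x * (Real.exp 1 * F (x:ℕ)) else 0)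
        + (if (x:ℕ)+1 = (y:ℕ) then pup n γmin lam x * (F (x:ℕ) * Real.exp (-1)) else 0)
        + (if (x:ℕ) = (y:ℕ) then (1 - pdown n q γmax lam x - pup n γmin lam x) * F (x:ℕ) else 0) := by
    intro y
    rw [bdMatrix_apply]
    by_cases h1 : (y:ℕ)+1 = (x:ℕ)
    · rw [if_pos h1, if_pos h1, if_neg (by omega), if_neg (by omega), add_zero, add_zero]
      have hy : G y ≤ Real.exp 1 * F (x:ℕ) := by
        have h := hGF y
        have he : F ((y:ℕ)) = F ((x:ℕ) - 1) := by congr 1; omega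
        rw [← hFdown, ← he]
        exact h
      exact mul_le_mul_of_nonneg_left hy hd
    · rw [if_neg h1, if_neg h1]
      by_cases h2 : (x:ℕ)+1 = (y:ℕ)
      · rw [if_pos h2, if_pos h2, if_neg (by omega), zero_add, add_zero]
        have hy : G y ≤ F ((x:ℕ) + 1) := by
          rw [h2]
          exact hGF y
        rw [← hFup]
        exact mul_le_mul_of_nonneg_left hy hu
      · rw [if_neg h2, if_neg h2]
        by_cases h3 : x = y
        · rw [if_pos h3, if_pos (congrArg Fin.val h3), zero_add, zero_add]
          have hy : G y ≤ F (x:ℕ) := by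
            rw [show (x:ℕ) = (y:ℕ) from congrArg Fin.val h3]
            exact hGF y
          exact mul_le_mul_of_nonneg_left hy (by linarith)
        · rw [if_neg h3, if_neg (fun hh => h3 (Fin.ext hh))]
          simp
  have hs1 : ∑ y : Fin (n+1), (if (y:ℕ)+1 = (x:ℕ) then pdown n q γmax lam x * (Real.exp 1 * F (x:ℕ)) else 0)
      ≤ pdown n q γmax lam x * (Real.exp 1 * F (x:ℕ)) :=
    sum_ite_le (mul_nonneg hd (by positivity)) _ (fun a b ha hb => Fin.ext (by omega))
  have hs2 : ∑ y : Fin (n+1), (if (x:ℕ)+1 = (y:ℕ) then pup n γmin lam x * (F (x:ℕ) * Real.exp (-1)) else 0)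
      ≤ pup n γmin lam x * (F (x:ℕ) * Real.exp (-1)) :=
    sum_ite_le (mul_nonneg hu (by positivity)) _ (fun a b ha hb => Fin.ext (by omega))
  have hs3 : ∑ y : Fin (n+1), (if (x:ℕ) = (y:ℕ) then (1 - pdown n q γmax lam x - pup n γmin lam x) * F (x:ℕ) else 0)
      ≤ (1 - pdown n q γmax lam x - pup n γmin lam x) * F (x:ℕ) :=
    sum_ite_le (mul_nonneg (by linarith) (hFpos _).le) _ (fun a b ha hb => Fin.ext (by omega))
  have hinv : Real.exp (-1) * Real.exp 1 = 1 := by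
    rw [← Real.exp_add]; norm_num
  have he1 : (1:ℝ) ≤ Real.exp 1 := by nlinarith [Real.add_one_le_exp 1]
  have h5 : pdown n q γmax lam x ≤ pup n γmin lam x * Real.exp (-1) := by
    have hh := mul_le_mul_of_nonneg_right hk (Real.exp_pos (-1)).le
    nlinarith [hh, hinv]
  have h6 : pdown n q γmax lam x * (Real.exp 1 - 1)
      ≤ pup n γmin lam x * Real.exp (-1) * (Real.exp 1 - 1) :=
    mul_le_mul_of_nonneg_right h5 (by linarith)
  have h6F := mul_le_mul_of_nonneg_right h6 (hFpos (x:ℕ)).le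
  have h7 : pup n γmin lam x * Real.exp (-1) * Real.exp 1 * F (x:ℕ)
      = pup n γmin lam x * F (x:ℕ) := by
    have : pup n γmin lam x * Real.exp (-1) * Real.exp 1 * F (x:ℕ)
        = pup n γmin lam x * (Real.exp (-1) * Real.exp 1) * F (x:ℕ) := by ring
    rw [this, hinv, mul_one]
  calc ∑ y : Fin (n+1), bdMatrix n q γmin γmax lam x y * G y
      ≤ ∑ y : Fin (n+1),
          ((if (y:ℕ)+1 = (x:ℕ) then pdown n q γmax lam x * (Real.exp 1 * F (x:ℕ)) else 0)
          + (if (x:ℕ)+1 = (y:ℕ) then pup n γmin lam x * (F (x:ℕ) * Real.exp (-1)) else 0)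
          + (if (x:ℕ) = (y:ℕ) then (1 - pdown n q γmax lam x - pup n γmin lam x) * F (x:ℕ) else 0)) :=
        Finset.sum_le_sum fun y _ => hpt y
    _ ≤ pdown n q γmax lam x * (Real.exp 1 * F (x:ℕ))
          + pup n γmin lam x * (F (x:ℕ) * Real.exp (-1))
          + (1 - pdown n q γmax lam x - pup n γmin lam x) * F (x:ℕ) := by
        rw [Finset.sum_add_distrib, Finset.sum_add_distrib]
        exact add_le_add (add_le_add hs1 hs2) hs3
    _ ≤ F (x:ℕ) := by nlinarith [h6F, h7]
  done

end StepBound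

section MidLe

variable {n q : ℕ} {γmin γmax lam : ℝ} {r s : ℕ}

lemma midSum_le (hn : 1 ≤ n) (hq : 1 ≤ q) (hγmin : 0 < γmin) (hγ : γmin ≤ γmax)
    (hlam1 : γmax ≤ lam) (hlam2 : γmin + γmax / (q:ℝ) ≤ lam)
    (hkey : ∀ i : ℕ, 1 ≤ i → i ≤ s → Real.exp 1 * pdown n q γmax lam i ≤ pup n γmin lam i) :
    ∀ d : ℕ, ∀ x : Fin (n+1), r < (x:ℕ) → (x:ℕ) ≤ s →
      midSum (bdMatrix n q γmin γmax lam) r s d x ≤ Real.exp ((r:ℝ) - (x:ℕ)) := by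
  have hB := bdMatrix_nonneg (n := n) (q := q) hn hq hγmin hγ hlam1 hlam2
  intro d
  induction d with
  | zero =>
    intro x hx1 hx2
    have h0 : midSum (bdMatrix n q γmin γmax lam) r s 0 x = 0 := by
      rw [midSum, condSum]
      refine Finset.sum_eq_zero fun ω _ => if_neg ?_
      rintro ⟨ha, -, hc⟩
      rw [show Fin.last 0 = 0 from rfl, ha] at hc
      omega
    rw [h0]
    positivity
  | succ d ih =>
    intro x hx1 hx2
    rw [midSum_succ]
    refine step_bound hn hq hγmin hγ hlam1 hlam2 hkey x hx1 hx2 _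
      (fun y => condSum_nonneg hB _) ?_
    intro y
    by_cases hc : r < (y:ℕ) ∧ (y:ℕ) < s
    · calc condSum (bdMatrix n q γmin γmax lam)
            (fun ω : Fin (d+1) → Fin (n+1) => ω 0 = y ∧ midP r s d ω)
          ≤ midSum (bdMatrix n q γmin γmax lam) r s d y := by
            rw [midSum]
            refine condSum_mono hB fun ω hω => ?_
            exact ⟨hω.1, fun j _ hj => hω.2.1 j hj, hω.2.2⟩
        _ ≤ Real.exp ((r:ℝ) - (y:ℕ)) := ih y hc.1 (le_of_lt hc.2)
    · rcases Nat.eq_zero_or_pos d with hd0 | hd0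
      · subst hd0
        by_cases hyr : (y:ℕ) = r
        · refine le_trans (condSum_zero_pin_le _ y _) ?_
          rw [hyr]
          simp
        · have hz : condSum (bdMatrix n q γmin γmax lam)
              (fun ω : Fin (0+1) → Fin (n+1) => ω 0 = y ∧ midP r s 0 ω) = 0 := by
            rw [condSum]
            refine Finset.sum_eq_zero fun ω _ => if_neg ?_
            rintro ⟨ha, -, hc'⟩
            rw [show Fin.last 0 = 0 from rfl, ha] at hc'
            exact hyr hc'
          rw [hz]
          positivity
      · have hz : condSum (bdMatrix n q γmin γmax lam)
            (fun ω : Fin (d+1) → Fin (n+1) => ω 0 = y ∧ midP r s d ω) = 0 := by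
          rw [condSum]
          refine Finset.sum_eq_zero fun ω _ => if_neg ?_
          rintro ⟨ha, hP⟩
          have := hP.1 0 (by simpa using hd0)
          rw [ha] at this
          exact hc this
        rw [hz]
        positivity

end MidLe

section Pre

def preP {n : ℕ} (r s t k : ℕ) (ω : Fin (t+1) → Fin (n+1)) : Prop :=
  (∀ j : Fin (t+1), (j:ℕ) = k → (ω j : ℕ) = s)
  ∧ (∀ j : Fin (t+1), k < (j:ℕ) → (j:ℕ) < t → (r < (ω j:ℕ) ∧ (ω j:ℕ) < s))
  ∧ (ω (Fin.last t) : ℕ) = r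

noncomputable def preSum {n : ℕ} (B : Matrix (Fin (n+1)) (Fin (n+1)) ℝ) (r s t k : ℕ)
    (z : Fin (n+1)) : ℝ :=
  condSum B (fun ω : Fin (t+1) → Fin (n+1) => ω 0 = z ∧ preP r s t k ω)

lemma preSum_succ {n : ℕ} (B : Matrix (Fin (n+1)) (Fin (n+1)) ℝ) (r s t k : ℕ)
    (z : Fin (n+1)) :
    preSum B r s (t+1) (k+1) z = ∑ y : Fin (n+1), B z y * preSum B r s t k y := by
  rw [preSum]
  have hiff : ∀ ω : Fin (t+2) → Fin (n+1),
      (ω 0 = z ∧ preP r s (t+1) (k+1) ω)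
        ↔ (ω 0 = z ∧ preP (n := n) r s t k (fun j => ω j.succ)) := by
    intro ω
    constructor
    · rintro ⟨h0, hpin, hint, hlast⟩
      refine ⟨h0, ?_, ?_, ?_⟩
      · intro j hj
        exact hpin j.succ (by simp [Fin.val_succ, hj])
      · intro j hj1 hj2
        exact hint j.succ (by simp [Fin.val_succ]; omega) (by simp [Fin.val_succ]; omega)
      · show (ω (Fin.last t).succ : ℕ) = r
        rw [Fin.succ_last]
        exact hlast
    · rintro ⟨h0, hpin, hint, hlast⟩
      refine ⟨h0, ?_, ?_, ?_⟩
      · intro j hj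
        have hje : j = (⟨k, by omega⟩ : Fin (t+1)).succ := Fin.ext (by simp [Fin.val_succ]; omega)
        rw [hje]
        exact hpin _ rfl
      · intro j hj1 hj2
        have hje : j = (⟨(j:ℕ)-1, by omega⟩ : Fin (t+1)).succ :=
          Fin.ext (by simp [Fin.val_succ]; omega)
        rw [hje]
        exact hint _ (by simp; omega) (by simp; omega)
      · show (ω (Fin.last (t+1)) : ℕ) = r
        rw [← Fin.succ_last]
        exact hlast
  rw [condSum_congr B hiff, condSum_strip_left B z (preP (n := n) r s t k)]
  rfl

variable {n q : ℕ} {γmin γmax lam : ℝ} {r s : ℕ}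

lemma preSum_le (hn : 1 ≤ n) (hq : 1 ≤ q) (hγmin : 0 < γmin) (hγ : γmin ≤ γmax)
    (hlam1 : γmax ≤ lam) (hlam2 : γmin + γmax / (q:ℝ) ≤ lam)
    (hkey : ∀ i : ℕ, 1 ≤ i → i ≤ s → Real.exp 1 * pdown n q γmax lam i ≤ pup n γmin lam i)
    (hrs : r < s) (hsn : s < n + 1) :
    ∀ k t : ℕ, ∀ z : Fin (n+1), k ≤ t →
      preSum (bdMatrix n q γmin γmax lam) r s t k z ≤ Real.exp ((r:ℝ) - (s:ℕ)) := by
  have hB := bdMatrix_nonneg (n := n) (q := q) hn hq hγmin hγ hlam1 hlam2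
  have hrow := bdMatrix_row_le (n := n) (q := q) hn hq hγmin hγ hlam1 hlam2
  intro k
  induction k with
  | zero =>
    intro t z hkt
    have h1 : preSum (bdMatrix n q γmin γmax lam) r s t 0 z
        ≤ midSum (bdMatrix n q γmin γmax lam) r s t (⟨s, hsn⟩ : Fin (n+1)) := by
      rw [preSum, midSum]
      refine condSum_mono hB fun ω hω => ?_
      obtain ⟨h0, hpin, hint, hlast⟩ := hω
      have hω0 : ω 0 = (⟨s, hsn⟩ : Fin (n+1)) := Fin.ext (by simpa using hpin 0 rfl)
      exact ⟨hω0, fun j h0j hjt => hint j (by omega) hjt, hlast⟩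
    refine le_trans h1 ?_
    have h2 := midSum_le hn hq hγmin hγ hlam1 hlam2 hkey t (⟨s, hsn⟩ : Fin (n+1))
      (by simpa using hrs) (by simp)
    simpa using h2
  | succ k ihk =>
    intro t z hkt
    obtain ⟨t', rfl⟩ : ∃ t', t = t' + 1 := ⟨t - 1, by omega⟩
    rw [preSum_succ]
    calc ∑ y : Fin (n+1), bdMatrix n q γmin γmax lam z y
          * preSum (bdMatrix n q γmin γmax lam) r s t' k y
        ≤ ∑ y : Fin (n+1), bdMatrix n q γmin γmax lam z y * Real.exp ((r:ℝ) - (s:ℕ)) :=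
          Finset.sum_le_sum fun y _ =>
            mul_le_mul_of_nonneg_left (ihk t' y (by omega)) (hB z y)
      _ = (∑ y : Fin (n+1), bdMatrix n q γmin γmax lam z y) * Real.exp ((r:ℝ) - (s:ℕ)) := by
          rw [Finset.sum_mul]
      _ ≤ 1 * Real.exp ((r:ℝ) - (s:ℕ)) :=
          mul_le_mul_of_nonneg_right (hrow z) (Real.exp_pos _).le
      _ = Real.exp ((r:ℝ) - (s:ℕ)) := one_mul _

end Pre

section Pair

def pairP {n : ℕ} (r s t k l : ℕ) (ω : Fin (t+1) → Fin (n+1)) : Prop :=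
  ω 0 = 0 ∧ (∀ j : Fin (t+1), (j:ℕ) = k → (ω j : ℕ) = s)
  ∧ (∀ j : Fin (t+1), k < (j:ℕ) → (j:ℕ) < l → (r < (ω j:ℕ) ∧ (ω j:ℕ) < s))
  ∧ (∀ j : Fin (t+1), (j:ℕ) = l → (ω j : ℕ) = r)

noncomputable def pairSum {n : ℕ} (B : Matrix (Fin (n+1)) (Fin (n+1)) ℝ)
    (r s k l t : ℕ) : ℝ :=
  condSum B (pairP r s t k l)

lemma pairSum_drop {n : ℕ} {B : Matrix (Fin (n+1)) (Fin (n+1)) ℝ}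
    (hB : ∀ x y, 0 ≤ B x y) (hrow : ∀ x, ∑ y : Fin (n+1), B x y ≤ 1)
    {r s k l : ℕ} (hkl : k < l) :
    ∀ u : ℕ, pairSum B r s k l (l + u) ≤ pairSum B r s k l l := by
  intro u
  induction u with
  | zero => exact le_rfl
  | succ u ihu =>
    refine le_trans ?_ ihu
    have hiff : ∀ ω : Fin ((l+u)+2) → Fin (n+1),
        pairP r s (l+u+1) k l ω ↔ pairP (n := n) r s (l+u) k l (fun j => ω j.castSucc) := by
      intro ω
      constructor
      · rintro ⟨h0, hpin, hint, hfin⟩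
        refine ⟨?_, ?_, ?_, ?_⟩
        · show ω (Fin.castSucc 0) = 0
          rw [Fin.castSucc_zero]
          exact h0
        · intro j hj
          exact hpin j.castSucc (by simpa using hj)
        · intro j hj1 hj2
          exact hint j.castSucc (by simpa using hj1) (by simpa using hj2)
        · intro j hj
          exact hfin j.castSucc (by simpa using hj)
      · rintro ⟨h0, hpin, hint, hfin⟩
        refine ⟨?_, ?_, ?_, ?_⟩
        · exact h0
        · intro j hj
          have hje : j = Fin.castSucc (⟨k, by omega⟩ : Fin ((l+u)+1)) := Fin.ext (by simp [hj])
          rw [hje]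
          exact hpin _ rfl
        · intro j hj1 hj2
          have hje : j = Fin.castSucc (⟨(j:ℕ), by omega⟩ : Fin ((l+u)+1)) := Fin.ext (by simp)
          rw [hje]
          exact hint _ (by simpa using hj1) (by simpa using hj2)
        · intro j hj
          have hje : j = Fin.castSucc (⟨l, by omega⟩ : Fin ((l+u)+1)) := Fin.ext (by simp [hj])
          rw [hje]
          exact hfin _ rfl
    calc pairSum B r s k l (l+u+1)
        = condSum B (fun ω : Fin ((l+u)+2) → Fin (n+1)
            => pairP (n := n) r s (l+u) k l (fun j => ω j.castSucc)) :=
          condSum_congr B hiff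
      _ ≤ condSum B (pairP (n := n) r s (l+u) k l) := condSum_strip_last hB hrow _
      _ = pairSum B r s k l (l+u) := rfl

lemma pairSum_le_pre {n : ℕ} {B : Matrix (Fin (n+1)) (Fin (n+1)) ℝ}
    (hB : ∀ x y, 0 ≤ B x y) {r s k l : ℕ} :
    pairSum B r s k l l ≤ preSum B r s l k 0 := by
  rw [pairSum, preSum]
  refine condSum_mono hB fun ω hω => ?_
  obtain ⟨h0, hpin, hint, hfin⟩ := hω
  exact ⟨h0, hpin, hint, hfin (Fin.last l) (Fin.val_last l)⟩

end Pair

section Witness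

lemma exists_pair {n m s r : ℕ} (hrs : r < s) (ω : Fin (m+1) → Fin (n+1))
    (hstep : ∀ i : Fin m, (ω i.castSucc : ℕ) ≤ (ω i.succ : ℕ) + 1
      ∧ (ω i.succ : ℕ) ≤ (ω i.castSucc : ℕ) + 1)
    (hlast : (ω (Fin.last m) : ℕ) ≤ r)
    (hhit : ∃ i, (ω i : ℕ) = s) :
    ∃ k l : Fin (m+1), k < l ∧
      (∀ j : Fin (m+1), (j:ℕ) = (k:ℕ) → (ω j : ℕ) = s) ∧
      (∀ j : Fin (m+1), (k:ℕ) < (j:ℕ) → (j:ℕ) < (l:ℕ) → (r < (ω j:ℕ) ∧ (ω j:ℕ) < s)) ∧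
      (∀ j : Fin (m+1), (j:ℕ) = (l:ℕ) → (ω j : ℕ) = r) := by
  classical
  obtain ⟨i0, hi0⟩ := hhit
  set K : Finset (Fin (m+1)) := Finset.univ.filter (fun i => (ω i : ℕ) = s) with hK
  have hKne : K.Nonempty := ⟨i0, by simp [hK, hi0]⟩
  set k := K.max' hKne with hk
  have hks : (ω k : ℕ) = s := by
    have := K.max'_mem hKne
    simp only [hK, Finset.mem_filter, Finset.mem_univ, true_and] at this
    exact this
  have hkmax : ∀ i : Fin (m+1), (ω i : ℕ) = s → i ≤ k := fun i hi =>
    K.le_max' i (by simp [hK, hi])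
  have hklast : k < Fin.last m := by
    refine lt_of_le_of_ne (Fin.le_last k) fun he => ?_
    rw [he] at hks
    omega
  set L : Finset (Fin (m+1)) := Finset.univ.filter (fun j => k < j ∧ (ω j : ℕ) ≤ r) with hL
  have hLne : L.Nonempty := ⟨Fin.last m, by
    simp only [hL, Finset.mem_filter, Finset.mem_univ, true_and]
    exact ⟨hklast, hlast⟩⟩
  set l := L.min' hLne with hl
  have hlmem := L.min'_mem hLne
  simp only [hL, Finset.mem_filter, Finset.mem_univ, true_and] at hlmem
  have hkl : k < l := hlmem.1
  have hlr : (ω l : ℕ) ≤ r := hlmem.2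
  have hlmin : ∀ j : Fin (m+1), k < j → (ω j : ℕ) ≤ r → l ≤ j := fun j h1 h2 =>
    L.min'_le j (by simp only [hL, Finset.mem_filter, Finset.mem_univ, true_and]; exact ⟨h1, h2⟩)
  have hklv : (k:ℕ) < (l:ℕ) := Fin.lt_def.mp hkl
  have hlm : (l:ℕ) ≤ m := Fin.is_le l
  set i1 : Fin m := ⟨(l:ℕ)-1, by omega⟩ with hi1
  have hs1 : i1.succ = l := Fin.ext (by simp [hi1, Fin.val_succ]; omega)
  have hprev : r < (ω i1.castSucc : ℕ) := by
    by_cases hek : (l:ℕ)-1 = (k:ℕ)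
    · have heq : i1.castSucc = k := Fin.ext (by simp [hi1]; omega)
      rw [heq, hks]
      omega
    · by_contra hle
      push_neg at hle
      have h1 : k < i1.castSucc := by
        rw [Fin.lt_def]
        simp only [Fin.coe_castSucc, hi1]
        omega
      have h2 := hlmin i1.castSucc h1 hle
      rw [Fin.le_def] at h2
      simp only [Fin.coe_castSucc, hi1] at h2
      omega
  have hωl : (ω l : ℕ) = r := by
    have hstep1 := (hstep i1).1
    rw [hs1] at hstep1
    omega
  have hup : ∀ j : Fin (m+1), k < j → (ω j : ℕ) < s := by
    intro j hkj
    by_contra hge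
    push_neg at hge
    have hjs : (ω j : ℕ) ≠ s := fun he => absurd (hkmax j he) (not_le.mpr hkj)
    have hgt : s < (ω j : ℕ) := lt_of_le_of_ne hge (Ne.symm hjs)
    set M : Finset (Fin (m+1)) := Finset.univ.filter (fun i => j ≤ i ∧ (ω i : ℕ) ≤ s) with hM
    have hMne : M.Nonempty := ⟨Fin.last m, by
      simp only [hM, Finset.mem_filter, Finset.mem_univ, true_and]
      exact ⟨Fin.le_last j, by omega⟩⟩
    set i' := M.min' hMne with hi'
    have hi'mem := M.min'_mem hMne
    simp only [hM, Finset.mem_filter, Finset.mem_univ, true_and] at hi'mem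
    have hji' : j ≤ i' := hi'mem.1
    have hi's : (ω i' : ℕ) ≤ s := hi'mem.2
    have hne : i' ≠ j := fun he => by rw [he] at hi's; omega
    have hjlt : j < i' := lt_of_le_of_ne hji' (Ne.symm hne)
    have hjltv : (j:ℕ) < (i':ℕ) := Fin.lt_def.mp hjlt
    have hi'm : (i':ℕ) ≤ m := Fin.is_le i'
    set i2 : Fin m := ⟨(i':ℕ)-1, by omega⟩ with hi2
    have hs2 : i2.succ = i' := Fin.ext (by simp [hi2, Fin.val_succ]; omega)
    have hprev2 : s < (ω i2.castSucc : ℕ) := by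
      by_contra hle2
      push_neg at hle2
      have hji2 : j ≤ i2.castSucc := by
        rw [Fin.le_def]
        simp only [Fin.coe_castSucc, hi2]
        omega
      have h3 := M.min'_le i2.castSucc
        (by simp only [hM, Finset.mem_filter, Finset.mem_univ, true_and]; exact ⟨hji2, hle2⟩)
      rw [← hi', Fin.le_def] at h3
      simp only [Fin.coe_castSucc, hi2] at h3
      omega
    have hstep2 := (hstep i2).1
    rw [hs2] at hstep2
    have hωi' : (ω i' : ℕ) = s := by omega
    have hik := Fin.le_def.mp (hkmax i' hωi')
    have hkjv := Fin.lt_def.mp hkj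
    omega
  refine ⟨k, l, hkl, ?_, ?_, ?_⟩
  · intro j hj
    have he : j = k := Fin.ext hj
    rw [he]
    exact hks
  · intro j h1 h2
    have hj1 : k < j := Fin.lt_def.mpr h1
    constructor
    · by_contra hle
      push_neg at hle
      have h3 := Fin.le_def.mp (hlmin j hj1 hle)
      omega
    · exact hup j hj1
  · intro j hj
    have he : j = l := Fin.ext hj
    rw [he]
    exact hωl

end Witness


lemma hit_le_pairs {n m : ℕ} {B : Matrix (Fin (n+1)) (Fin (n+1)) ℝ}
    (hB : ∀ x y, 0 ≤ B x y)
    (hBstep : ∀ x y : Fin (n+1), B x y ≠ 0 → ((x:ℕ) ≤ (y:ℕ)+1 ∧ (y:ℕ) ≤ (x:ℕ)+1))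
    {r s : ℕ} (hrs : r < s) :
    hitAndLowProb B s r m
      ≤ ∑ p ∈ Finset.univ.filter (fun p : Fin m × Fin m => (p.1:ℕ) ≤ (p.2:ℕ)),
          pairSum B r s (p.1:ℕ) ((p.2:ℕ)+1) m := by
  classical
  rw [hitAndLowProb]
  have hre : ∀ p : Fin m × Fin m, pairSum B r s (p.1:ℕ) ((p.2:ℕ)+1) m
      = ∑ ω : Fin (m+1) → Fin (n+1),
          (if pairP r s m (p.1:ℕ) ((p.2:ℕ)+1) ω then stepProd B ω else 0) := fun p => rfl
  rw [Finset.sum_congr rfl fun p _ => hre p, Finset.sum_comm]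
  refine Finset.sum_le_sum fun ω _ => ?_
  have hnn : ∀ (c : Prop) [Decidable c], (0:ℝ) ≤ if c then stepProd B ω else 0 := by
    intro c _
    split
    · exact stepProd_nonneg hB ω
    · exact le_rfl
  by_cases horig : (ω 0 = 0 ∧ (ω (Fin.last m):ℕ) ≤ r ∧ ∃ i, (ω i:ℕ) = s)
  · rw [if_pos horig]
    by_cases hzero : ∃ i : Fin m, B (ω i.castSucc) (ω i.succ) = 0
    · obtain ⟨i, hi⟩ := hzero
      have hz : (∏ i : Fin m, B (ω i.castSucc) (ω i.succ)) = 0 :=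
        Finset.prod_eq_zero (Finset.mem_univ i) hi
      rw [hz]
      exact Finset.sum_nonneg fun p _ => hnn _
    · push_neg at hzero
      have hstepω : ∀ i : Fin m, (ω i.castSucc : ℕ) ≤ (ω i.succ:ℕ)+1
          ∧ (ω i.succ:ℕ) ≤ (ω i.castSucc:ℕ)+1 := by
        intro i
        have h := hBstep _ _ (hzero i)
        exact ⟨h.1, h.2⟩
      obtain ⟨k, l, hkl, hpin, hint, hfin⟩ := exists_pair hrs ω hstepω horig.2.1 horig.2.2
      have hkv : (k:ℕ) < (l:ℕ) := Fin.lt_def.mp hkl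
      have hlm : (l:ℕ) ≤ m := Fin.is_le l
      have hm0 : 0 < m := by omega
      set p : Fin m × Fin m := (⟨(k:ℕ), by omega⟩, ⟨(l:ℕ)-1, by omega⟩) with hp
      have hp1 : (p.1:ℕ) = (k:ℕ) := rfl
      have hp2 : ((p.2:ℕ))+1 = (l:ℕ) := by
        show ((l:ℕ)-1)+1 = (l:ℕ)
        omega
      have hpmem : p ∈ Finset.univ.filter (fun p : Fin m × Fin m => (p.1:ℕ) ≤ (p.2:ℕ)) := by
        simp only [Finset.mem_filter, Finset.mem_univ, true_and]
        omega
      have hcond : pairP r s m (p.1:ℕ) ((p.2:ℕ)+1) ω :=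
        ⟨horig.1, fun j hj => hpin j (by omega),
          fun j h1 h2 => hint j (by omega) (by omega),
          fun j hj => hfin j (by omega)⟩
      have hsingle := Finset.single_le_sum
        (f := fun p : Fin m × Fin m =>
          if pairP r s m (p.1:ℕ) ((p.2:ℕ)+1) ω then stepProd B ω else 0)
        (fun p _ => hnn _) hpmem
      refine le_trans ?_ hsingle
      exact le_of_eq (if_pos hcond).symm
  · rw [if_neg horig]
    exact Finset.sum_nonneg fun p _ => hnn _

end RPB


open RPB

/-- **Return probability bound after hitting `r★` (Lemma 7).**
If `0 < δ ≤ q/(q + e γ★)`, `nδ ≥ 1`, `r★ = ⌊nδ⌋` and `0 ≤ r ≤ ⌊nδ⌋/2`, then for every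
`m ≥ 0`, `P(Ȳ_m ≤ r ∧ τ_{r★} ≤ m) ≤ m² exp(−nδ/2 + 1)`. -/
theorem return_probability_bound
    (n q : ℕ) (hn : 1 ≤ n) (hq : 1 ≤ q)
    (γmin γmax lam δ : ℝ)
    (hγmin : 0 < γmin) (hγ : γmin ≤ γmax)
    (hlam : max γmax (γmin + γmax / (q : ℝ)) ≤ lam)
    (γstar : ℝ) (hγstar : γstar = γmax / γmin)
    (hδ0 : 0 < δ) (hδ : δ ≤ (q : ℝ) / (q + Real.exp 1 * γstar))
    (hnδ : 1 ≤ (n : ℝ) * δ)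
    (r : ℕ) (hr : (r : ℝ) ≤ (⌊(n : ℝ) * δ⌋₊ : ℝ) / 2)
    (m : ℕ) :
    hitAndLowProb (bdMatrix n q γmin γmax lam) (⌊(n : ℝ) * δ⌋₊) r m
      ≤ (m : ℝ) ^ 2 * Real.exp (-((n : ℝ) * δ / 2) + 1) := by
  classical
  subst hγstar
  set s : ℕ := ⌊(n : ℝ) * δ⌋₊ with hs
  have hlam1 : γmax ≤ lam := le_trans (le_max_left _ _) hlam
  have hlam2 : γmin + γmax / (q:ℝ) ≤ lam := le_trans (le_max_right _ _) hlam
  have hn0 : (0:ℝ) < n := by exact_mod_cast hn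
  have hq0 : (0:ℝ) < q := by exact_mod_cast hq
  have hγmax : 0 < γmax := lt_of_lt_of_le hγmin hγ
  have hδ1 : δ < 1 := by
    refine lt_of_le_of_lt hδ ?_
    rw [div_lt_one (by positivity)]
    nlinarith [Real.exp_pos 1, div_pos hγmax hγmin]
  have hnd : (0:ℝ) ≤ (n:ℝ)*δ := by positivity
  have hsle : (s:ℝ) ≤ (n:ℝ)*δ := Nat.floor_le hnd
  have hs1 : 1 ≤ s := Nat.le_floor (by simpa using hnδ)
  have hsn : s < n + 1 := by
    have h1 : (s:ℝ) < (n:ℝ) := lt_of_le_of_lt hsle (by nlinarith)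
    have h2 : s < n := by exact_mod_cast h1
    omega
  have hrs : r < s := by
    by_contra h
    push_neg at h
    have h1 : (s:ℝ) ≤ (r:ℝ) := by exact_mod_cast h
    have h2 : (1:ℝ) ≤ (s:ℝ) := by exact_mod_cast hs1
    linarith
  have hkey : ∀ i : ℕ, 1 ≤ i → i ≤ s →
      Real.exp 1 * pdown n q γmax lam i ≤ pup n γmin lam i := by
    intro i h1 h2
    refine key_ratio hn hq hγmin hγ hlam1 hδ0 hδ h1 ?_
    refine le_trans ?_ hsle
    exact_mod_cast h2
  have hB := bdMatrix_nonneg (n := n) (q := q) hn hq hγmin hγ hlam1 hlam2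
  have hrow := bdMatrix_row_le (n := n) (q := q) hn hq hγmin hγ hlam1 hlam2
  have hBstep : ∀ x y : Fin (n+1), bdMatrix n q γmin γmax lam x y ≠ 0 →
      ((x:ℕ) ≤ (y:ℕ)+1 ∧ (y:ℕ) ≤ (x:ℕ)+1) := by
    intro x y h
    rcases bdMatrix_ne_zero h with h' | h' | h' <;> omega
  have step1 := hit_le_pairs (m := m) hB hBstep hrs
  have perpair : ∀ p : Fin m × Fin m, (p.1:ℕ) ≤ (p.2:ℕ) →
      pairSum (bdMatrix n q γmin γmax lam) r s (p.1:ℕ) ((p.2:ℕ)+1) m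
        ≤ Real.exp ((r:ℝ) - (s:ℕ)) := by
    intro p hp
    have hkl : (p.1:ℕ) < (p.2:ℕ)+1 := by omega
    have hlm : (p.2:ℕ)+1 ≤ m := p.2.isLt
    have h1 : pairSum (bdMatrix n q γmin γmax lam) r s (p.1:ℕ) ((p.2:ℕ)+1) m
        ≤ pairSum (bdMatrix n q γmin γmax lam) r s (p.1:ℕ) ((p.2:ℕ)+1) ((p.2:ℕ)+1) := by
      have h := pairSum_drop (r := r) (s := s) hB hrow hkl (m - ((p.2:ℕ)+1))
      rwa [show (p.2:ℕ)+1 + (m - ((p.2:ℕ)+1)) = m by omega] at h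
    refine le_trans h1 (le_trans (pairSum_le_pre hB) ?_)
    exact preSum_le hn hq hγmin hγ hlam1 hlam2 hkey hrs hsn (p.1:ℕ) ((p.2:ℕ)+1) 0 (by omega)
  set P : Finset (Fin m × Fin m) := Finset.univ.filter (fun p => (p.1:ℕ) ≤ (p.2:ℕ)) with hP
  have step2 : ∑ p ∈ P, pairSum (bdMatrix n q γmin γmax lam) r s (p.1:ℕ) ((p.2:ℕ)+1) m
      ≤ (P.card : ℝ) * Real.exp ((r:ℝ) - (s:ℕ)) := by
    have h := Finset.sum_le_card_nsmul P
      (fun p => pairSum (bdMatrix n q γmin γmax lam) r s (p.1:ℕ) ((p.2:ℕ)+1) m)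
      (Real.exp ((r:ℝ) - (s:ℕ)))
      (fun p hp => perpair p (by
        rw [hP, Finset.mem_filter] at hp
        exact hp.2))
    simpa [nsmul_eq_mul] using h
  have hcard : (P.card : ℝ) ≤ (m:ℝ)^2 := by
    have h1 : P.card ≤ (Finset.univ : Finset (Fin m × Fin m)).card := Finset.card_filter_le _ _
    have h2 : (Finset.univ : Finset (Fin m × Fin m)).card = m * m := by
      simp [Finset.card_univ]
    rw [h2] at h1
    have : (P.card : ℝ) ≤ (m*m : ℕ) := by exact_mod_cast h1
    calc (P.card : ℝ) ≤ ((m*m : ℕ) : ℝ) := this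
      _ = (m:ℝ)^2 := by push_cast; ring
  have hexp : Real.exp ((r:ℝ) - (s:ℕ)) ≤ Real.exp (-((n:ℝ) * δ / 2) + 1) := by
    apply Real.exp_le_exp.mpr
    have hfl : (n:ℝ)*δ < (s:ℝ) + 1 := by
      rw [hs]
      exact Nat.lt_floor_add_one _
    linarith
  calc hitAndLowProb (bdMatrix n q γmin γmax lam) s r m
      ≤ ∑ p ∈ P, pairSum (bdMatrix n q γmin γmax lam) r s (p.1:ℕ) ((p.2:ℕ)+1) m := step1
    _ ≤ (P.card : ℝ) * Real.exp ((r:ℝ) - (s:ℕ)) := step2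
    _ ≤ (m:ℝ)^2 * Real.exp (-((n:ℝ) * δ / 2) + 1) :=
        mul_le_mul hcard hexp (Real.exp_pos _).le (by positivity)
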